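/- In the setting of a hypersurface Σ^n ⊂ M^{n+1}, the normal vector Z = (γ n!)⁻¹ ḡ^{ij} ε_{j k₁ ⋯ k_n} {x^{k₁},…,x^{k_n}} ∂_i has unit length: ḡ(Z,Z) = 1. -/

import Mathlib

open scoped BigOperators
noncomputable section

open Classical in
/-- The totally antisymmetric Levi-Civita symbol with `ε^{01⋯(n-1)} = 1`. -/
def eps {n : ℕ} (v : Fin n → Fin n) : ℝ :=
  if h : Function.Bijective v then ((Equiv.Perm.sign (Equiv.ofBijective v h) : ℤ) : ℝ) else 0

/-- Partial derivative `∂_a f` of a function on the chart `ℝ^ν` of `Σ`. -/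
def pd {ν : ℕ} (a : Fin ν) (f : (Fin ν → ℝ) → ℝ) (p : Fin ν → ℝ) : ℝ :=
  fderiv ℝ f p (Pi.single a 1)

/-- The Nambu bracket `{f₁,…,f_ν} = ρ⁻¹ ε^{a₁⋯a_ν} (∂_{a₁}f₁)⋯(∂_{a_ν}f_ν)`. -/
def nb {ν : ℕ} (ρ : (Fin ν → ℝ) → ℝ) (f : Fin ν → (Fin ν → ℝ) → ℝ) (p : Fin ν → ℝ) : ℝ :=
  (ρ p)⁻¹ * ∑ σ : Fin ν → Fin ν, eps σ * ∏ a : Fin ν, pd (σ a) (f a) p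

lemma eps_perm {m : ℕ} (σ : Equiv.Perm (Fin m)) :
    eps (σ : Fin m → Fin m) = ((Equiv.Perm.sign σ : ℤ) : ℝ) := by
  classical
  rw [eps, dif_pos σ.bijective]
  have h : Equiv.ofBijective (⇑σ) σ.bijective = σ := Equiv.ext fun x => rfl
  rw [h]

lemma eps_eq_det {m : ℕ} (v : Fin m → Fin m) :
    eps v = Matrix.det (Matrix.of fun i j => if v i = j then (1:ℝ) else 0) := by
  classical
  by_cases h : Function.Bijective v
  · rw [eps, dif_pos h]
    have he : (Matrix.of fun i j => if v i = j then (1:ℝ) else 0)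
        = Equiv.Perm.permMatrix ℝ (Equiv.ofBijective v h) := by
      ext i j
      simp [Equiv.Perm.permMatrix, PEquiv.toMatrix, Equiv.toPEquiv, Equiv.ofBijective,
        Option.mem_def, eq_comm]
    rw [he, Matrix.det_permutation]
  · rw [eps, dif_neg h]
    have hni : ¬ Function.Injective v := by
      intro hinj
      exact h ⟨hinj, Finite.surjective_of_injective hinj⟩
    rw [Function.not_injective_iff] at hni
    obtain ⟨a, b, hab, hne⟩ := hni
    refine (Matrix.det_zero_of_row_eq hne ?_).symm
    funext j
    simp [Matrix.of_apply, hab]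

lemma sum_eps {m : ℕ} (P : (Fin m → Fin m) → ℝ) :
    ∑ v : Fin m → Fin m, eps v * P v
      = ∑ σ : Equiv.Perm (Fin m), ((Equiv.Perm.sign σ : ℤ) : ℝ) * P σ := by
  classical
  rw [← Finset.sum_filter_add_sum_filter_not Finset.univ (fun v => Function.Bijective v)]
  have h0 : ∑ v ∈ Finset.univ.filter (fun v => ¬ Function.Bijective v), eps v * P v = 0 := by
    refine Finset.sum_eq_zero fun v hv => ?_
    rw [Finset.mem_filter] at hv
    rw [eps, dif_neg hv.2, zero_mul]
  rw [h0, add_zero]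
  refine (Finset.sum_nbij' (i := fun (σ : Equiv.Perm (Fin m)) => (σ : Fin m → Fin m))
      (j := fun (v : Fin m → Fin m) =>
        if h : Function.Bijective v then Equiv.ofBijective v h else Equiv.refl _)
      ?_ ?_ ?_ ?_ ?_).symm
  · intro σ _; exact Finset.mem_filter.mpr ⟨Finset.mem_univ _, σ.bijective⟩
  · intro v hv; exact Finset.mem_univ _
  · intro σ _
    rw [dif_pos σ.bijective]
    exact Equiv.ext fun x => rfl
  · intro v hv
    rw [Finset.mem_filter] at hv
    rw [dif_pos hv.2]; rfl
  · intro σ _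
    rw [eps_perm]

lemma sum_eps_prod {m : ℕ} (F : Fin m → Fin m → ℝ) :
    ∑ v : Fin m → Fin m, eps v * ∏ a, F (v a) a = Matrix.det (Matrix.of F) := by
  rw [Matrix.det_apply', sum_eps]
  rfl

lemma eps_comp_perm {m : ℕ} (v : Fin m → Fin m) (σ : Equiv.Perm (Fin m)) :
    eps (v ∘ σ) = ((Equiv.Perm.sign σ : ℤ) : ℝ) * eps v := by
  rw [eps_eq_det, eps_eq_det v]
  have h : (Matrix.of fun i j => if (v ∘ σ) i = j then (1:ℝ) else 0)
      = (Matrix.of fun i j => if v i = j then (1:ℝ) else 0).submatrix σ id := rfl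
  rw [h, Matrix.det_permute]

lemma eps_cons_comp {n : ℕ} (j : Fin (n+1)) (k : Fin n → Fin (n+1)) (σ : Equiv.Perm (Fin n)) :
    eps (Fin.cons j (k ∘ σ)) = ((Equiv.Perm.sign σ : ℤ) : ℝ) * eps (Fin.cons j k) := by
  have hσ : Fin.cons j (k ∘ σ) = (Fin.cons j k) ∘ (Equiv.Perm.decomposeFin.symm (0, σ)) := by
    funext i
    refine Fin.cases ?_ (fun a => ?_) i
    · simp
    · simp [Equiv.Perm.decomposeFin_symm_apply_succ]
  rw [hσ, eps_comp_perm, Equiv.Perm.decomposeFin.symm_sign]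
  simp

lemma sum_cons_split {n : ℕ} {β M : Type*} [Fintype β] [AddCommMonoid M]
    (G : (Fin (n+1) → β) → M) :
    ∑ v : Fin (n+1) → β, G v = ∑ j : β, ∑ k : Fin n → β, G (Fin.cons j k) := by
  calc ∑ v : Fin (n+1) → β, G v
      = ∑ q : β × (Fin n → β), G ((Fin.consEquiv fun _ => β) q) :=
        (Fintype.sum_equiv (Fin.consEquiv fun _ => β) _ _ (fun q => rfl)).symm
    _ = ∑ j : β, ∑ k : Fin n → β, G (Fin.cons j k) := by rw [Fintype.sum_prod_type]; rfl

open Matrix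

def Cvec {n : ℕ} (J : Matrix (Fin (n+1)) (Fin n) ℝ) (j : Fin (n+1)) : ℝ :=
  ∑ k : Fin n → Fin (n+1), eps (Fin.cons j k) * ∏ a, J (k a) a

def Bmat {n : ℕ} (J : Matrix (Fin (n+1)) (Fin n) ℝ) (e : Fin (n+1) → ℝ) :
    Matrix (Fin (n+1)) (Fin (n+1)) ℝ :=
  Matrix.of fun i c => Fin.cons (α := fun _ => ℝ) (e i) (fun a => J i a) c

@[simp] lemma Bmat_zero {n : ℕ} (J : Matrix (Fin (n+1)) (Fin n) ℝ) (e : Fin (n+1) → ℝ)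
    (i : Fin (n+1)) : Bmat J e i 0 = e i := by simp [Bmat]

@[simp] lemma Bmat_succ {n : ℕ} (J : Matrix (Fin (n+1)) (Fin n) ℝ) (e : Fin (n+1) → ℝ)
    (i : Fin (n+1)) (a : Fin n) : Bmat J e i a.succ = J i a := by simp [Bmat]

lemma det_Bmat {n : ℕ} (J : Matrix (Fin (n+1)) (Fin n) ℝ) (e : Fin (n+1) → ℝ) :
    (Bmat J e).det = ∑ j, e j * Cvec J j := by
  have h1 : (Bmat J e).det
      = ∑ v : Fin (n+1) → Fin (n+1), eps v * ∏ c, Bmat J e (v c) c :=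
    (sum_eps_prod _).symm
  rw [h1, sum_cons_split (fun v => eps v * ∏ c, Bmat J e (v c) c)]
  refine Finset.sum_congr rfl fun j _ => ?_
  rw [Cvec, Finset.mul_sum]
  refine Finset.sum_congr rfl fun k _ => ?_
  rw [Fin.prod_univ_succ]
  simp only [Fin.cons_zero, Fin.cons_succ, Bmat_zero, Bmat_succ]
  ring

lemma Cvec_orthogonal {n : ℕ} (J : Matrix (Fin (n+1)) (Fin n) ℝ) (b : Fin n) :
    ∑ j, J j b * Cvec J j = 0 := by
  rw [← det_Bmat J (fun j => J j b)]
  refine Matrix.det_zero_of_column_eq (i := (0 : Fin (n+1))) (j := b.succ)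
    (Fin.succ_ne_zero b).symm ?_
  intro i
  simp

lemma key_det {n : ℕ} (M : Matrix (Fin (n+1)) (Fin (n+1)) ℝ) (J : Matrix (Fin (n+1)) (Fin n) ℝ)
    (e : Fin (n+1) → ℝ)
    (he : ∀ a : Fin n, ∑ i, J i a * M.mulVec e i = 0) :
    (∑ j, e j * Cvec J j)^2 * M.det
      = (∑ i, e i * M.mulVec e i) * (Jᵀ * M * J).det := by
  have hcol : ∀ c, ((Bmat J e)ᵀ * M * (Bmat J e)) c 0 = ∑ i, Bmat J e i c * M.mulVec e i := by
    intro c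
    rw [Matrix.mul_apply]
    simp only [Matrix.mul_apply, Matrix.transpose_apply, Bmat_zero, Matrix.mulVec,
      dotProduct, Finset.sum_mul, Finset.mul_sum]
    rw [Finset.sum_comm]
    refine Finset.sum_congr rfl fun i _ => Finset.sum_congr rfl fun j _ => by ring
  have hminor : ((Bmat J e)ᵀ * M * (Bmat J e)).submatrix (Fin.succAbove 0) Fin.succ = Jᵀ * M * J := by
    ext a b
    simp only [Matrix.submatrix_apply, Fin.zero_succAbove]
    rw [Matrix.mul_apply, Matrix.mul_apply]
    refine Finset.sum_congr rfl fun j _ => ?_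
    rw [Matrix.mul_apply, Matrix.mul_apply]
    simp only [Matrix.transpose_apply, Bmat_succ]

  have hdet1 : ((Bmat J e)ᵀ * M * (Bmat J e)).det = (∑ i, e i * M.mulVec e i) * (Jᵀ * M * J).det := by
    have h0 : ((Bmat J e)ᵀ * M * (Bmat J e)) 0 0 = ∑ i, e i * M.mulVec e i := by
      rw [hcol]
      exact Finset.sum_congr rfl fun i _ => by rw [Bmat_zero]
    have hs : ∀ a : Fin n, ((Bmat J e)ᵀ * M * (Bmat J e)) a.succ 0 = 0 := by
      intro a
      rw [hcol]
      rw [← he a]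
      exact Finset.sum_congr rfl fun i _ => by rw [Bmat_succ]
    rw [Matrix.det_succ_column_zero, Fin.sum_univ_succ]
    have hz : ∑ a : Fin n,
        (-1 : ℝ) ^ ((a.succ : Fin (n+1)) : ℕ) * ((Bmat J e)ᵀ * M * (Bmat J e)) a.succ 0 *
          ((((Bmat J e)ᵀ * M * (Bmat J e)).submatrix a.succ.succAbove Fin.succ)).det = 0 :=
      Finset.sum_eq_zero fun a _ => by rw [hs a]; ring
    rw [hz, add_zero, h0, hminor]
    simp
  have hdet2 : ((Bmat J e)ᵀ * M * (Bmat J e)).det = (Bmat J e).det * M.det * (Bmat J e).det := by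
    rw [Matrix.det_mul, Matrix.det_mul, Matrix.det_transpose]
  rw [← hdet1, hdet2, det_Bmat]
  ring

lemma nb_sum {n : ℕ} (J : Matrix (Fin (n+1)) (Fin n) ℝ) (j : Fin (n+1)) :
    ∑ k : Fin n → Fin (n+1), eps (Fin.cons j k)
        * ∑ v : Fin n → Fin n, eps v * ∏ a, J (k a) (v a)
      = (n.factorial : ℝ) * Cvec J j := by
  have step1 : ∑ k : Fin n → Fin (n+1), eps (Fin.cons j k)
        * ∑ v : Fin n → Fin n, eps v * ∏ a, J (k a) (v a)
      = ∑ v : Fin n → Fin n, eps v *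
          ∑ k : Fin n → Fin (n+1), eps (Fin.cons j k) * ∏ a, J (k a) (v a) := by
    simp only [Finset.mul_sum]
    rw [Finset.sum_comm]
    exact Finset.sum_congr rfl fun v _ => Finset.sum_congr rfl fun k _ => by ring
  rw [step1, sum_eps]
  have step2 : ∀ σ : Equiv.Perm (Fin n),
      ∑ k : Fin n → Fin (n+1), eps (Fin.cons j k) * ∏ a, J (k a) (σ a)
        = ((Equiv.Perm.sign σ : ℤ) : ℝ) * Cvec J j := by
    intro σ
    rw [Cvec, Finset.mul_sum]
    refine (Fintype.sum_equiv (Equiv.arrowCongr σ.symm (Equiv.refl (Fin (n+1))))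
      (fun k => ((Equiv.Perm.sign σ : ℤ) : ℝ) * (eps (Fin.cons j k) * ∏ a, J (k a) a))
      (fun k => eps (Fin.cons j k) * ∏ a, J (k a) (σ a)) (fun k => ?_)).symm
    have harr : (Equiv.arrowCongr σ.symm (Equiv.refl (Fin (n+1)))) k = k ∘ σ := rfl
    rw [harr]
    show ((Equiv.Perm.sign σ : ℤ) : ℝ) * (eps (Fin.cons j k) * ∏ a, J (k a) a)
        = eps (Fin.cons j (k ∘ σ)) * ∏ a, J ((k ∘ σ) a) (σ a)
    rw [eps_cons_comp]
    have hprod : ∏ a, J ((k ∘ σ) a) (σ a) = ∏ a, J (k a) a := by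
      exact Equiv.prod_comp σ (fun b => J (k b) b)
    rw [hprod]
    ring
  calc ∑ σ : Equiv.Perm (Fin n), ((Equiv.Perm.sign σ : ℤ) : ℝ) *
          ∑ k : Fin n → Fin (n+1), eps (Fin.cons j k) * ∏ a, J (k a) (σ a)
      = ∑ σ : Equiv.Perm (Fin n), Cvec J j := by
        refine Finset.sum_congr rfl fun σ _ => ?_
        rw [step2 σ, ← mul_assoc]
        rcases Int.units_eq_one_or (Equiv.Perm.sign σ) with h | h <;> rw [h] <;> norm_num
    _ = (n.factorial : ℝ) * Cvec J j := by
        rw [Finset.sum_const, Finset.card_univ, Fintype.card_perm, Fintype.card_fin,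
          nsmul_eq_mul]

/-- For a hypersurface `Σ^n ⊂ M^{n+1}`, the normal vector
`Z = (γ n!)⁻¹ ḡ^{ij} ε_{j k₁⋯k_n} {x^{k₁},…,x^{k_n}} ∂_i` has unit length: `ḡ(Z,Z) = 1`. -/
theorem Z_unit_length (n : ℕ)
    (ρ : (Fin n → ℝ) → ℝ)
    (x : Fin (n + 1) → (Fin n → ℝ) → ℝ)
    (gbar : (Fin n → ℝ) → Matrix (Fin (n + 1)) (Fin (n + 1)) ℝ)
    (p : Fin n → ℝ)
    (hgbar : (gbar p).PosDef)
    (hρ : ρ p ≠ 0)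
    (gind : Matrix (Fin n) (Fin n) ℝ)
    (hgind : gind = Matrix.of fun a c =>
      ∑ i, ∑ j, gbar p i j * pd a (x i) p * pd c (x j) p)
    (hgpos : 0 < gind.det)
    (γ : ℝ) (hγ : γ = Real.sqrt gind.det / ρ p)
    (Z : Fin (n + 1) → ℝ)
    (hZ : Z = fun i => (γ * (n.factorial : ℝ))⁻¹ *
      ∑ j, (gbar p)⁻¹ i j *
        ∑ k : Fin n → Fin (n + 1),
          (Real.sqrt (gbar p).det * eps (Fin.cons j k)) * nb ρ (fun l => x (k l)) p) :
    ∑ i, ∑ j, gbar p i j * Z i * Z j = 1 := by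
  classical
  set M : Matrix (Fin (n+1)) (Fin (n+1)) ℝ := gbar p with hM
  set J : Matrix (Fin (n+1)) (Fin n) ℝ := Matrix.of fun i a => pd a (x i) p with hJ
  have hdetM : 0 < M.det := hgbar.det_pos
  have hMunit : IsUnit M.det := isUnit_iff_ne_zero.mpr hdetM.ne'
  have hMinv : M * M⁻¹ = 1 := Matrix.mul_nonsing_inv _ hMunit
  -- gind = Jᵀ M J
  have hgindJ : gind = Jᵀ * M * J := by
    rw [hgind]
    ext a c
    show (∑ i, ∑ j, M i j * pd a (x i) p * pd c (x j) p) = (Jᵀ * M * J) a c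
    rw [Matrix.mul_apply]
    simp only [Matrix.mul_apply, Matrix.transpose_apply, hJ, Matrix.of_apply,
      Finset.sum_mul]
    rw [Finset.sum_comm]
    exact Finset.sum_congr rfl fun i _ => Finset.sum_congr rfl fun jj _ => by ring
  -- the N vector and s
  set N : Fin (n+1) → ℝ := M⁻¹.mulVec (Cvec J) with hN
  have hMN : M.mulVec N = Cvec J := by
    rw [hN, Matrix.mulVec_mulVec, hMinv, Matrix.one_mulVec]
  set s : ℝ := ∑ i, N i * Cvec J i with hs
  have hkey : s^2 * M.det = s * gind.det := by
    have he : ∀ a : Fin n, ∑ i, J i a * M.mulVec N i = 0 := by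
      intro a
      rw [hMN]
      exact Cvec_orthogonal J a
    have h := key_det M J N he
    rw [hMN] at h
    rw [hgindJ]
    exact h
  -- Cvec ≠ 0
  have hCne : (Cvec J : Fin (n+1) → ℝ) ≠ 0 := by
    intro hC0
    have hJM : ∀ (e : Fin (n+1) → ℝ) (a : Fin n),
        ((Jᵀ * M).mulVec e) a = ∑ i, J i a * M.mulVec e i := by
      intro e a
      simp only [Matrix.mulVec, dotProduct, Matrix.mul_apply,
        Matrix.transpose_apply, Finset.sum_mul, Finset.mul_sum]
      rw [Finset.sum_comm]
      exact Finset.sum_congr rfl fun i _ => Finset.sum_congr rfl fun jj _ => by ring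
    have hni : ¬ Function.Injective ((Jᵀ * M).mulVecLin) := by
      intro hinj
      have hle := LinearMap.finrank_le_finrank_of_injective hinj
      rw [Module.finrank_fintype_fun_eq_card, Module.finrank_fintype_fun_eq_card,
        Fintype.card_fin, Fintype.card_fin] at hle
      omega
    rw [← LinearMap.ker_eq_bot] at hni
    obtain ⟨e, hke, he0⟩ := Submodule.exists_mem_ne_zero_of_ne_bot hni
    have he' : ∀ a : Fin n, ∑ i, J i a * M.mulVec e i = 0 := by
      intro a
      rw [← hJM e a]
      have : (Jᵀ * M).mulVec e = 0 := hke
      rw [this]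
      rfl
    have hk := key_det M J e he'
    have hl : (∑ j, e j * Cvec J j) = 0 := by
      refine Finset.sum_eq_zero fun j _ => ?_
      rw [hC0]
      simp
    rw [hl] at hk
    have hq : 0 < ∑ i, e i * M.mulVec e i := by
      have h2 := hgbar.dotProduct_mulVec_pos he0
      have : dotProduct (star e) (M *ᵥ e) = ∑ i, e i * M.mulVec e i := by
        simp [dotProduct]
      rwa [this] at h2
    have : gind.det = 0 := by
      rw [hgindJ]
      have h0 : (0:ℝ) = (∑ i, e i * M.mulVec e i) * (Jᵀ * M * J).det := by
        rw [← hk]; ring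
      rcases mul_eq_zero.mp h0.symm with h0 | h0
      · exact absurd h0 hq.ne'
      · exact h0
    exact absurd this hgpos.ne'
  have hspos : 0 < s := by
    have h2 := hgbar.inv.dotProduct_mulVec_pos hCne
    have heq : dotProduct (star (Cvec J)) (M⁻¹ *ᵥ (Cvec J)) = s := by
      rw [hs]
      simp only [dotProduct, star_trivial]
      exact Finset.sum_congr rfl fun i _ => by rw [hN]; ring
    rwa [heq] at h2
  have hsd : s * M.det = gind.det := by
    have := hkey
    have h3 : s * (s * M.det) = s * gind.det := by rw [← this]; ring
    exact mul_left_cancel₀ hspos.ne' h3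
  -- rewrite Z
  have hW : ∀ j : Fin (n+1),
      (∑ k : Fin n → Fin (n + 1),
          (Real.sqrt M.det * eps (Fin.cons j k)) * nb ρ (fun l => x (k l)) p)
        = Real.sqrt M.det * (ρ p)⁻¹ * (n.factorial : ℝ) * Cvec J j := by
    intro j
    have hterm : ∀ k : Fin n → Fin (n+1),
        (Real.sqrt M.det * eps (Fin.cons j k)) * nb ρ (fun l => x (k l)) p
          = (Real.sqrt M.det * (ρ p)⁻¹)
              * (eps (Fin.cons j k) * ∑ v : Fin n → Fin n, eps v * ∏ a, J (k a) (v a)) := by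
      intro k
      rw [nb]
      have : ∀ v : Fin n → Fin n,
          (∏ a, pd (v a) ((fun l => x (k l)) a) p) = ∏ a, J (k a) (v a) := by
        intro v
        exact Finset.prod_congr rfl fun a _ => by rw [hJ]; rfl
      rw [Finset.sum_congr rfl fun v _ => by rw [this v]]
      ring
    rw [Finset.sum_congr rfl fun k _ => hterm k, ← Finset.mul_sum, nb_sum]
    ring
  set c : ℝ := (γ * (n.factorial : ℝ))⁻¹ * (Real.sqrt M.det * (ρ p)⁻¹ * (n.factorial : ℝ))
    with hc
  have hZ2 : ∀ i, Z i = c * N i := by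
    intro i
    rw [hZ]
    simp only
    rw [Finset.sum_congr rfl fun j _ => by rw [hW j]]
    have hNi : N i = ∑ j, M⁻¹ i j * Cvec J j := by
      rw [hN]
      simp [Matrix.mulVec, dotProduct]
    simp only [hNi, hc, Finset.mul_sum]
    exact Finset.sum_congr rfl fun j _ => by ring
  -- final computation
  have hsum : ∑ i, ∑ j, M i j * Z i * Z j = c^2 * s := by
    rw [Finset.sum_congr rfl fun i _ => Finset.sum_congr rfl fun j _ => by
      rw [hZ2 i, hZ2 j]]
    have hrow : ∀ i, ∑ j, M i j * (c * N i) * (c * N j)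
        = c^2 * (N i * M.mulVec N i) := by
      intro i
      have : M.mulVec N i = ∑ j, M i j * N j := by
        simp [Matrix.mulVec, dotProduct]
      rw [this, Finset.mul_sum, Finset.mul_sum]
      exact Finset.sum_congr rfl fun j _ => by ring
    rw [Finset.sum_congr rfl fun i _ => hrow i, ← Finset.mul_sum, hs]
    rw [Finset.sum_congr rfl fun i _ => by rw [hMN]]
  rw [hsum]
  -- now pure algebra
  have hsqM : Real.sqrt M.det ^ 2 = M.det := Real.sq_sqrt hdetM.le
  have hγ2 : γ^2 * (ρ p)^2 = gind.det := by
    rw [hγ]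
    rw [div_pow, Real.sq_sqrt hgpos.le]
    field_simp
  have hγne : γ ≠ 0 := by
    intro h0
    rw [h0] at hγ2
    simp at hγ2
    exact hgpos.ne' hγ2.symm
  have hfac : ((n.factorial : ℝ)) ≠ 0 := Nat.cast_ne_zero.mpr (Nat.factorial_ne_zero n)
  rw [hc]
  have hsval : s = gind.det / M.det := by
    field_simp [hdetM.ne'] at hsd ⊢
    linarith [hsd]
  rw [hsval]
  field_simp
  rw [hsqM]
  rw [← hγ2]
  ring
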